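/- Let A* > 0 and B* be constants, and let (σ_n²)_{n≥1} be a nonnegative real sequence with σ_n² = A*·(log n)³ + B*·(log n)² + O(log n). Then, as n → ∞, (1/θ(n−1)) · Σ_{i=1}^{n−1} |σ_n² − σ_i²|^{3/2}/(n−i) = O((log n)²); equivalently, E[ ( |σ_n² − σ_{I_n}²| / (A*·(log n)³) )^{3/2} ] = O((log n)^{−5/2}), where I_n has P(I_n = i) = 1/((n−i)·θ(n−1)) for 1 ≤ i ≤ n−1. -/

import Mathlib

open MeasureTheory Filter Real Asymptotics

noncomputable section

/-- The harmonic sum `θ(n) = ∑_{i=1}^n 1/i`. -/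
def harmSum (n : ℕ) : ℝ := ∑ i ∈ Finset.Icc 1 n, (1 : ℝ) / i

/-- H x = x^{3/2} for x ≥ 0, via sqrt. -/
def Hf (x : ℝ) : ℝ := Real.sqrt (x ^ 3)

lemma rpow_half_nat (x : ℝ) (hx : 0 ≤ x) (k : ℕ) :
    x ^ ((k : ℝ) / 2) = Real.sqrt (x ^ k) := by
  rw [Real.sqrt_eq_rpow, ← Real.rpow_natCast x k, ← Real.rpow_mul hx]
  ring_nf

lemma Hf_eq (x : ℝ) (hx : 0 ≤ x) : x ^ ((3:ℝ)/2) = Hf x := by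
  have := rpow_half_nat x hx 3
  norm_num at this ⊢
  exact this

lemma Hf_nonneg (x : ℝ) : 0 ≤ Hf x := Real.sqrt_nonneg _

lemma Hf_mono {a b : ℝ} (hb : a ≤ b) (ha : 0 ≤ a) : Hf a ≤ Hf b :=
  Real.sqrt_le_sqrt (by nlinarith [pow_le_pow_left₀ ha hb 3])

lemma Hf_mul (a b : ℝ) (ha : 0 ≤ a) : Hf (a * b) = Hf a * Hf b := by
  unfold Hf
  rw [mul_pow, Real.sqrt_mul (by positivity)]

lemma Hf_add_le {a b : ℝ} (ha : 0 ≤ a) (hb : 0 ≤ b) :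
    Hf (a + b) ≤ 2 * (Hf a + Hf b) := by
  have h1 : Hf (a+b) ≤ Real.sqrt ((2*(Hf a + Hf b))^2) := by
    apply Real.sqrt_le_sqrt
    have ha3 : Hf a ^ 2 = a ^ 3 := Real.sq_sqrt (by positivity)
    have hb3 : Hf b ^ 2 = b ^ 3 := Real.sq_sqrt (by positivity)
    have hpq : 0 ≤ Hf a * Hf b := mul_nonneg (Hf_nonneg a) (Hf_nonneg b)
    nlinarith [sq_nonneg (a-b), mul_nonneg (mul_nonneg ha hb) (add_nonneg ha hb), hpq, ha3, hb3, sq_nonneg (Hf a - Hf b)]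
  rwa [Real.sqrt_sq (by have := Hf_nonneg a; have := Hf_nonneg b; linarith)] at h1

lemma harmSum_eq (n : ℕ) : harmSum n = ((harmonic n : ℚ) : ℝ) := by
  rw [harmonic_eq_sum_Icc]
  push_cast
  simp [harmSum, one_div]

lemma log_le_harmSum (n : ℕ) (hn : 1 ≤ n) : Real.log n ≤ harmSum (n-1) := by
  have := log_add_one_le_harmonic (n-1)
  rw [harmSum_eq]
  have hn' : n - 1 + 1 = n := Nat.succ_pred_eq_of_pos hn
  rwa [hn'] at this

lemma harmSum_le (n : ℕ) (hn : 3 ≤ n) : harmSum (n-1) ≤ 2 * Real.log n := by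
  rw [harmSum_eq]
  have h1 := harmonic_le_one_add_log (n-1)
  have hn1 : (2:ℝ) ≤ ((n-1:ℕ):ℝ) := by
    have : 2 ≤ n - 1 := by omega
    exact_mod_cast this
  have h2 : Real.log (n-1 : ℕ) ≤ Real.log n := by
    apply Real.log_le_log (by linarith)
    have : n - 1 ≤ n := Nat.sub_le n 1
    exact_mod_cast this
  have h3 : (1:ℝ) ≤ Real.log n := by
    rw [show (1:ℝ) = Real.log (Real.exp 1) by simp]
    apply Real.log_le_log (Real.exp_pos 1)
    calc Real.exp 1 ≤ 3 := by
          linarith [Real.exp_one_lt_d9]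
      _ ≤ (n:ℝ) := by exact_mod_cast hn
  linarith

lemma sum_inv_sqrt_le (m : ℕ) :
    ∑ i ∈ Finset.Icc 1 m, 1 / Real.sqrt i ≤ 2 * Real.sqrt m := by
  induction m with
  | zero => simp
  | succ m ih =>
    rw [Finset.sum_Icc_succ_top (by omega)]
    have ha : (0:ℝ) < Real.sqrt (m+1) := Real.sqrt_pos.mpr (by positivity)
    have hab : Real.sqrt m ≤ Real.sqrt (m+1) := Real.sqrt_le_sqrt (by linarith)
    have ha2 : Real.sqrt (m+1) ^ 2 = (m:ℝ)+1 := Real.sq_sqrt (by positivity)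
    have hb2 : Real.sqrt m ^ 2 = (m:ℝ) := Real.sq_sqrt (by positivity)
    have key : 1 / Real.sqrt (m+1) ≤ 2 * Real.sqrt (m+1) - 2 * Real.sqrt m := by
      rw [div_le_iff₀ ha]
      nlinarith [sq_nonneg (Real.sqrt (m+1) - Real.sqrt m)]
    have hcast : ((m+1 : ℕ):ℝ) = (m:ℝ)+1 := by push_cast; ring
    rw [hcast]
    linarith

lemma sum_inv_shift (n : ℕ) (hn : 1 ≤ n) :
    ∑ i ∈ Finset.Icc 1 (n-1), 1 / ((n:ℝ) - i) = harmSum (n-1) := by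
  unfold harmSum
  apply Finset.sum_nbij' (fun i => n - i) (fun j => n - j)
  · intro a ha; simp only [Finset.mem_Icc] at ha ⊢; omega
  · intro a ha; simp only [Finset.mem_Icc] at ha ⊢; omega
  · intro a ha; simp only [Finset.mem_Icc] at ha; omega
  · intro a ha; simp only [Finset.mem_Icc] at ha; omega
  · intro a ha
    simp only [Finset.mem_Icc] at ha
    have : ((n - a : ℕ):ℝ) = (n:ℝ) - a := by
      have : a ≤ n := by omega
      push_cast [this]; ring
    rw [this]

lemma log_cube_le (x : ℝ) (hx : 1 ≤ x) : Real.log x ^ 3 ≤ 27 * x := by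
  have h1 : Real.log x ≤ 3 * x ^ ((1:ℝ)/3) := by
    have := Real.log_le_rpow_div (le_trans zero_le_one hx) (by norm_num : (0:ℝ) < 1/3)
    calc Real.log x ≤ x ^ ((1:ℝ)/3) / (1/3) := this
      _ = 3 * x ^ ((1:ℝ)/3) := by ring
  have hlog : 0 ≤ Real.log x := Real.log_nonneg hx
  have h2 : Real.log x ^ 3 ≤ (3 * x ^ ((1:ℝ)/3)) ^ 3 := pow_le_pow_left₀ hlog h1 3
  have h3 : (x ^ ((1:ℝ)/3)) ^ (3:ℕ) = x := by
    rw [← Real.rpow_natCast (x ^ ((1:ℝ)/3)) 3, ← Real.rpow_mul (by linarith)]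
    norm_num
  calc Real.log x ^ 3 ≤ (3 * x ^ ((1:ℝ)/3)) ^ 3 := h2
    _ = 27 * x := by rw [mul_pow, h3]; norm_num

lemma Hu_div_le (n i : ℕ) (hn : 3 ≤ n) (hi : 1 ≤ i) (hin : i ≤ n - 1) :
    Hf (Real.log n - Real.log i) / ((n:ℝ) - i)
      ≤ 3 / (n:ℝ) + 12 / Real.sqrt n * (1 / Real.sqrt i) := by
  have hI : (1:ℝ) ≤ (i:ℝ) := by exact_mod_cast hi
  have hIN : (i:ℝ) ≤ (n:ℝ) - 1 := by
    have : (i:ℝ) ≤ ((n-1:ℕ):ℝ) := by exact_mod_cast hin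
    have h2 : ((n-1:ℕ):ℝ) = (n:ℝ) - 1 := by
      have : 1 ≤ n := by omega
      push_cast [this]; ring
    linarith
  have hN : (3:ℝ) ≤ (n:ℝ) := by exact_mod_cast hn
  set d : ℝ := (n:ℝ) - i with hd
  have hd1 : (1:ℝ) ≤ d := by simp only [hd]; linarith
  have hdN : d ≤ (n:ℝ) := by simp only [hd]; linarith
  have hIpos : (0:ℝ) < i := by linarith
  have hNpos : (0:ℝ) < n := by linarith
  have hu_eq : Real.log n - Real.log i = Real.log ((n:ℝ)/i) :=
    (Real.log_div (by linarith) (by linarith)).symm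
  have hui : (1:ℝ) ≤ (n:ℝ)/i := by
    rw [le_div_iff₀ hIpos]; linarith
  have hu0 : 0 ≤ Real.log n - Real.log i := by
    rw [hu_eq]; exact Real.log_nonneg hui
  rcases le_or_gt n (2*i) with hcase | hcase
  · -- i large: u ≤ 2d/n
    have h2i : (n:ℝ) ≤ 2*i := by exact_mod_cast hcase
    have hu1 : Real.log n - Real.log i ≤ d / i := by
      rw [hu_eq]
      have := Real.log_le_sub_one_of_pos (show (0:ℝ) < (n:ℝ)/i by positivity)
      calc Real.log ((n:ℝ)/i) ≤ (n:ℝ)/i - 1 := this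
        _ = d / i := by field_simp; rw [hd]
    have hu2 : d / i ≤ 2*d/(n:ℝ) := by
      rw [div_le_div_iff₀ hIpos hNpos]
      nlinarith
    have hu : Real.log n - Real.log i ≤ 2*d/(n:ℝ) := le_trans hu1 hu2
    have hcube : (Real.log n - Real.log i)^3 ≤ (3*d/(n:ℝ))^2 := by
      have h8 : (Real.log n - Real.log i)^3 ≤ (2*d/(n:ℝ))^3 :=
        pow_le_pow_left₀ hu0 hu 3
      have hdn1 : d/(n:ℝ) ≤ 1 := by rw [div_le_one hNpos]; linarith
      have hdn0 : 0 ≤ d/(n:ℝ) := by positivity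
      calc (Real.log n - Real.log i)^3 ≤ (2*d/(n:ℝ))^3 := h8
        _ = 8 * (d/(n:ℝ))^2 * (d/(n:ℝ)) := by ring
        _ ≤ 9 * (d/(n:ℝ))^2 := by nlinarith
        _ = (3*d/(n:ℝ))^2 := by ring
    have hHu : Hf (Real.log n - Real.log i) ≤ 3*d/(n:ℝ) := by
      unfold Hf
      calc Real.sqrt ((Real.log n - Real.log i)^3)
          ≤ Real.sqrt ((3*d/(n:ℝ))^2) := Real.sqrt_le_sqrt hcube
        _ = 3*d/(n:ℝ) := Real.sqrt_sq (by positivity)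
    have : Hf (Real.log n - Real.log i) / d ≤ 3/(n:ℝ) := by
      rw [div_le_iff₀ (by linarith : (0:ℝ) < d)]
      calc Hf (Real.log n - Real.log i) ≤ 3*d/(n:ℝ) := hHu
        _ = 3/(n:ℝ)*d := by ring
    have hrest : 0 ≤ 12 / Real.sqrt n * (1 / Real.sqrt i) := by positivity
    linarith
  · -- i small: d > n/2
    have h2i : 2*(i:ℝ) < n := by exact_mod_cast hcase
    have hdhalf : (n:ℝ)/2 < d := by simp only [hd]; linarith
    have hcube : (Real.log n - Real.log i)^3 ≤ (6*Real.sqrt n/Real.sqrt i)^2 := by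
      have h27 := log_cube_le ((n:ℝ)/i) hui
      rw [hu_eq]
      have hsq : (6*Real.sqrt n/Real.sqrt i)^2 = 36*(n:ℝ)/i := by
        rw [div_pow, mul_pow]
        rw [Real.sq_sqrt (le_of_lt hNpos), Real.sq_sqrt (le_of_lt hIpos)]
        ring
      rw [hsq]
      calc Real.log ((n:ℝ)/i)^3 ≤ 27 * ((n:ℝ)/i) := h27
        _ = 27*(n:ℝ)/i := by ring
        _ ≤ 36*(n:ℝ)/i := by gcongr <;> linarith
    have hHu : Hf (Real.log n - Real.log i) ≤ 6*Real.sqrt n/Real.sqrt i := by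
      unfold Hf
      calc Real.sqrt ((Real.log n - Real.log i)^3)
          ≤ Real.sqrt ((6*Real.sqrt n/Real.sqrt i)^2) := Real.sqrt_le_sqrt hcube
        _ = 6*Real.sqrt n/Real.sqrt i := Real.sqrt_sq (by positivity)
    have hsqrtN : Real.sqrt n * Real.sqrt n = (n:ℝ) := Real.mul_self_sqrt (le_of_lt hNpos)
    have hsN : (0:ℝ) < Real.sqrt n := Real.sqrt_pos.mpr hNpos
    have hsI : (0:ℝ) < Real.sqrt i := Real.sqrt_pos.mpr hIpos
    have hmain : Hf (Real.log n - Real.log i) / d ≤ 12 / Real.sqrt n * (1 / Real.sqrt i) := by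
      have hdpos : (0:ℝ) < d := by linarith
      rw [div_le_iff₀ hdpos]
      have h1 : Hf (Real.log n - Real.log i) ≤ 6*Real.sqrt n/Real.sqrt i := hHu
      have h2 : 6*Real.sqrt n/Real.sqrt i ≤ 12 / Real.sqrt n * (1 / Real.sqrt i) * d := by
        rw [div_le_iff₀ hsI]
        have heq : 12 / Real.sqrt n * (1 / Real.sqrt i) * d * Real.sqrt i
            = 12 * d / Real.sqrt n := by field_simp
        rw [heq, le_div_iff₀ hsN]
        nlinarith [hsqrtN]
      linarith [h2]
    have : (0:ℝ) ≤ 3/(n:ℝ) := by positivity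
    linarith

lemma one_le_log (n : ℕ) (hn : 3 ≤ n) : 1 ≤ Real.log n := by
  rw [show (1:ℝ) = Real.log (Real.exp 1) by simp]
  apply Real.log_le_log (Real.exp_pos 1)
  calc Real.exp 1 ≤ 3 := by linarith [Real.exp_one_lt_d9]
    _ ≤ (n:ℝ) := by exact_mod_cast hn

lemma Hf_sq (L : ℝ) (hL : 0 ≤ L) : Hf (L^2) = L^3 := by
  unfold Hf
  rw [show (L^2)^3 = (L^3)^2 by ring, Real.sqrt_sq (by positivity)]

lemma sum_bound (σsq : ℕ → ℝ) (D E : ℝ) (hD0 : 0 ≤ D) (hE0 : 0 ≤ E) (n : ℕ) (hn : 3 ≤ n)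
    (hΔ : ∀ i, 1 ≤ i → i ≤ n-1 →
      |σsq n - σsq i| ≤ D*((Real.log n - Real.log i)*Real.log n^2) + E*Real.log n) :
    ∑ i ∈ Finset.Icc 1 (n-1), |σsq n - σsq i|^((3:ℝ)/2)/((n:ℝ)-(i:ℝ))
      ≤ (54*Hf D + 4*Hf E) * Real.log n^3 := by
  set L := Real.log n with hLdef
  have hL1 : 1 ≤ L := one_le_log n hn
  have hL0 : 0 ≤ L := by linarith
  have hN3 : (3:ℝ) ≤ (n:ℝ) := by exact_mod_cast hn
  have hHD := Hf_nonneg D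
  have hHE := Hf_nonneg E
  have hHL := Hf_nonneg L
  -- termwise bound
  have hterm : ∀ i ∈ Finset.Icc 1 (n-1),
      |σsq n - σsq i|^((3:ℝ)/2)/((n:ℝ)-(i:ℝ))
        ≤ 2*Hf D*L^3 * (Hf (L - Real.log i)/((n:ℝ)-(i:ℝ)))
          + 2*Hf E*Hf L * (1/((n:ℝ)-(i:ℝ))) := by
    intro i hi
    rw [Finset.mem_Icc] at hi
    obtain ⟨hi1, hi2⟩ := hi
    have hI : (1:ℝ) ≤ (i:ℝ) := by exact_mod_cast hi1
    have hIN : (i:ℝ) ≤ (n:ℝ) - 1 := by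
      have : (i:ℝ) ≤ ((n-1:ℕ):ℝ) := by exact_mod_cast hi2
      have h2 : ((n-1:ℕ):ℝ) = (n:ℝ) - 1 := by
        have : 1 ≤ n := by omega
        push_cast [this]; ring
      linarith
    have hdpos : (0:ℝ) < (n:ℝ)-(i:ℝ) := by linarith
    have hu0 : 0 ≤ L - Real.log i := by
      have : Real.log i ≤ L := Real.log_le_log (by linarith) (by linarith)
      linarith
    have hHu := Hf_nonneg (L - Real.log i)
    have hnum : |σsq n - σsq i|^((3:ℝ)/2)
        ≤ 2*Hf D*L^3 * Hf (L - Real.log i) + 2*Hf E*Hf L := by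
      rw [Hf_eq _ (abs_nonneg _)]
      calc Hf |σsq n - σsq i|
          ≤ Hf (D*((L - Real.log i)*L^2) + E*L) :=
            Hf_mono (hΔ i hi1 hi2) (abs_nonneg _)
        _ ≤ 2*(Hf (D*((L - Real.log i)*L^2)) + Hf (E*L)) :=
            Hf_add_le (by positivity) (by positivity)
        _ = 2*Hf D*L^3 * Hf (L - Real.log i) + 2*Hf E*Hf L := by
            rw [Hf_mul D _ hD0, Hf_mul _ _ hu0, Hf_mul E L hE0, Hf_sq L hL0]
            ring
    calc _ ≤ (2*Hf D*L^3 * Hf (L - Real.log i) + 2*Hf E*Hf L)/((n:ℝ)-(i:ℝ)) := by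
          gcongr
      _ = 2*Hf D*L^3 * (Hf (L - Real.log i)/((n:ℝ)-(i:ℝ)))
          + 2*Hf E*Hf L * (1/((n:ℝ)-(i:ℝ))) := by ring
  -- sum of Hu/(n-i) ≤ 27
  have hS27 : ∑ i ∈ Finset.Icc 1 (n-1), Hf (L - Real.log i)/((n:ℝ)-(i:ℝ)) ≤ 27 := by
    have hstep : ∀ i ∈ Finset.Icc 1 (n-1),
        Hf (L - Real.log i)/((n:ℝ)-(i:ℝ)) ≤ 3/(n:ℝ) + 12/Real.sqrt n * (1/Real.sqrt i) := by
      intro i hi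
      rw [Finset.mem_Icc] at hi
      exact Hu_div_le n i hn hi.1 hi.2
    calc ∑ i ∈ Finset.Icc 1 (n-1), Hf (L - Real.log i)/((n:ℝ)-(i:ℝ))
        ≤ ∑ i ∈ Finset.Icc 1 (n-1), (3/(n:ℝ) + 12/Real.sqrt n * (1/Real.sqrt i)) :=
          Finset.sum_le_sum hstep
      _ = ((n-1:ℕ):ℝ) * (3/(n:ℝ))
          + 12/Real.sqrt n * ∑ i ∈ Finset.Icc 1 (n-1), (1/Real.sqrt i) := by
          rw [Finset.sum_add_distrib, Finset.sum_const, ← Finset.mul_sum,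
            Nat.card_Icc]
          simp
      _ ≤ 3 + 24 := by
          have h1 : ((n-1:ℕ):ℝ) * (3/(n:ℝ)) ≤ 3 := by
            have hc : ((n-1:ℕ):ℝ) ≤ (n:ℝ) := by exact_mod_cast Nat.sub_le n 1
            have hn0 : (0:ℝ) < (n:ℝ) := by linarith
            calc ((n-1:ℕ):ℝ) * (3/(n:ℝ)) ≤ (n:ℝ) * (3/(n:ℝ)) := by
                  apply mul_le_mul_of_nonneg_right hc (by positivity)
              _ = 3 := by field_simp
          have h2 : 12/Real.sqrt n * ∑ i ∈ Finset.Icc 1 (n-1), (1/Real.sqrt i) ≤ 24 := by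
            have hs := sum_inv_sqrt_le (n-1)
            have hsq : Real.sqrt (n-1:ℕ) ≤ Real.sqrt n :=
              Real.sqrt_le_sqrt (by exact_mod_cast Nat.sub_le n 1)
            have hsn : (0:ℝ) < Real.sqrt n := Real.sqrt_pos.mpr (by linarith)
            have hsum_nonneg : 0 ≤ ∑ i ∈ Finset.Icc 1 (n-1), (1/Real.sqrt i) :=
              Finset.sum_nonneg fun i _ => by positivity
            calc 12/Real.sqrt n * ∑ i ∈ Finset.Icc 1 (n-1), (1/Real.sqrt i)
                ≤ 12/Real.sqrt n * (2*Real.sqrt n) := by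
                  apply mul_le_mul_of_nonneg_left _ (by positivity)
                  linarith
              _ = 24 := by field_simp; ring
          linarith
      _ ≤ 27 := by norm_num
  -- sum of 1/(n-i) = harmSum ≤ 2L
  have hSθ : ∑ i ∈ Finset.Icc 1 (n-1), 1/((n:ℝ)-(i:ℝ)) ≤ 2*L := by
    rw [sum_inv_shift n (by omega)]
    exact harmSum_le n hn
  have hθ0 : 0 ≤ ∑ i ∈ Finset.Icc 1 (n-1), 1/((n:ℝ)-(i:ℝ)) := by
    rw [sum_inv_shift n (by omega)]
    have := log_le_harmSum n (by omega)
    linarith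
  have hS0 : 0 ≤ ∑ i ∈ Finset.Icc 1 (n-1), Hf (L - Real.log i)/((n:ℝ)-(i:ℝ)) := by
    apply Finset.sum_nonneg
    intro i hi
    rw [Finset.mem_Icc] at hi
    have hIN : (i:ℝ) ≤ (n:ℝ) - 1 := by
      have : (i:ℝ) ≤ ((n-1:ℕ):ℝ) := by exact_mod_cast hi.2
      have h2 : ((n-1:ℕ):ℝ) = (n:ℝ) - 1 := by
        have : 1 ≤ n := by omega
        push_cast [this]; ring
      linarith
    exact div_nonneg (Hf_nonneg _) (by linarith)
  -- final assembly
  have hHfL_le : Hf L * L ≤ L^3 := by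
    have : Hf L ≤ L^2 := by
      unfold Hf
      calc Real.sqrt (L^3) ≤ Real.sqrt (L^4) := Real.sqrt_le_sqrt (by nlinarith [pow_nonneg hL0 3, hL1])
        _ = L^2 := by rw [show L^4 = (L^2)^2 by ring, Real.sqrt_sq (by positivity)]
    nlinarith
  calc ∑ i ∈ Finset.Icc 1 (n-1), |σsq n - σsq i|^((3:ℝ)/2)/((n:ℝ)-(i:ℝ))
      ≤ ∑ i ∈ Finset.Icc 1 (n-1),
        (2*Hf D*L^3 * (Hf (L - Real.log i)/((n:ℝ)-(i:ℝ)))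
          + 2*Hf E*Hf L * (1/((n:ℝ)-(i:ℝ)))) := Finset.sum_le_sum hterm
    _ = 2*Hf D*L^3 * (∑ i ∈ Finset.Icc 1 (n-1), Hf (L - Real.log i)/((n:ℝ)-(i:ℝ)))
        + 2*Hf E*Hf L * (∑ i ∈ Finset.Icc 1 (n-1), 1/((n:ℝ)-(i:ℝ))) := by
        rw [Finset.sum_add_distrib, ← Finset.mul_sum, ← Finset.mul_sum]
    _ ≤ 2*Hf D*L^3 * 27 + 2*Hf E*Hf L * (2*L) := by
        apply add_le_add
        · exact mul_le_mul_of_nonneg_left hS27 (by positivity)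
        · exact mul_le_mul_of_nonneg_left hSθ (by positivity)
    _ ≤ (54*Hf D + 4*Hf E) * L^3 := by nlinarith

lemma Hf_def (x : ℝ) : Hf x = Real.sqrt (x^3) := rfl

lemma rpow_5_half (x : ℝ) (hx : 0 ≤ x) : x ^ ((5:ℝ)/2) = Real.sqrt (x^5) := by
  have := rpow_half_nat x hx 5
  norm_num at this ⊢
  exact this

lemma delta_bound (Astar Bstar c M D E : ℝ) (hA : 0 < Astar) (hM0 : 0 ≤ M)
    (σsq P : ℕ → ℝ) (hP : ∀ k : ℕ, P k = Astar * Real.log k ^ 3 + Bstar * Real.log k ^ 2)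
    (herr : ∀ k : ℕ, 1 ≤ k → |σsq k - P k| ≤ c * Real.log k + M)
    (hc0 : 0 < c)
    (hD : D = 3*Astar + 2*|Bstar|) (hE : E = 2*c + 2*M) :
    ∀ n : ℕ, 3 ≤ n → ∀ i, 1 ≤ i → i ≤ n-1 →
      |σsq n - σsq i| ≤ D*((Real.log n - Real.log i)*Real.log n^2) + E*Real.log n := by
  intro n hn3 i hi1 hi2
  set L := Real.log n with hLdef
  set Li := Real.log i with hLidef
  have hL1 : 1 ≤ L := one_le_log n hn3
  have hLi0 : 0 ≤ Li := Real.log_nonneg (by exact_mod_cast hi1)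
  have hLiL : Li ≤ L := by
    apply Real.log_le_log (by exact_mod_cast hi1)
    have : i ≤ n := by omega
    exact_mod_cast this
  have hu0 : 0 ≤ L - Li := by linarith
  have hsplit : σsq n - σsq i = (P n - P i) + ((σsq n - P n) - (σsq i - P i)) := by ring
  have h1 : |σsq n - σsq i| ≤ |P n - P i| + |σsq n - P n| + |σsq i - P i| := by
    rw [hsplit]
    calc |(P n - P i) + ((σsq n - P n) - (σsq i - P i))|
        ≤ |P n - P i| + |(σsq n - P n) - (σsq i - P i)| := abs_add_le _ _
      _ ≤ |P n - P i| + (|σsq n - P n| + |σsq i - P i|) :=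
          add_le_add le_rfl (abs_sub _ _)
      _ = _ := by ring
  have hPd : |P n - P i| ≤ Astar*(3*(L-Li)*L^2) + abs Bstar * (2*(L-Li)*L) := by
    have hPeq : P n - P i = Astar*(L^3 - Li^3) + Bstar*(L^2 - Li^2) := by
      rw [hP n, hP i, ← hLdef, ← hLidef]; ring
    have hcube : L^3 - Li^3 ≤ 3*(L-Li)*L^2 := by
      nlinarith [mul_nonneg (mul_nonneg hu0 hu0) (by linarith : (0:ℝ) ≤ 2*L+Li)]
    have hcube0 : 0 ≤ L^3 - Li^3 := sub_nonneg.mpr (pow_le_pow_left₀ hLi0 hLiL 3)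
    have hsq : L^2 - Li^2 ≤ 2*(L-Li)*L := by nlinarith [sq_nonneg (L-Li)]
    have hsq0 : 0 ≤ L^2 - Li^2 := sub_nonneg.mpr (pow_le_pow_left₀ hLi0 hLiL 2)
    calc |P n - P i| = |Astar*(L^3 - Li^3) + Bstar*(L^2 - Li^2)| := by rw [hPeq]
      _ ≤ |Astar*(L^3 - Li^3)| + |Bstar*(L^2 - Li^2)| := abs_add_le _ _
      _ = Astar*(L^3 - Li^3) + abs Bstar * (L^2 - Li^2) := by
          rw [abs_mul, abs_mul, abs_of_nonneg (le_of_lt hA), abs_of_nonneg hcube0,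
            abs_of_nonneg hsq0]
      _ ≤ Astar*(3*(L-Li)*L^2) + abs Bstar * (2*(L-Li)*L) := by
          apply add_le_add
          · exact mul_le_mul_of_nonneg_left hcube (le_of_lt hA)
          · exact mul_le_mul_of_nonneg_left hsq (abs_nonneg _)
  have hen : |σsq n - P n| ≤ c*L + M := herr n (by omega)
  have hei : |σsq i - P i| ≤ c*L + M := by
    have h2 : |σsq i - P i| ≤ c*Li + M := herr i hi1
    nlinarith
  have habs : 0 ≤ |Bstar| := abs_nonneg _
  have key : Astar*(3*(L-Li)*L^2) + abs Bstar * (2*(L-Li)*L) + (c*L+M) + (c*L+M)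
      ≤ D*((L - Li)*L^2) + E*L := by
    have hL0' : (0:ℝ) ≤ L := by linarith
    have hLL : (0:ℝ) ≤ L^2 - L := by nlinarith [mul_nonneg hL0' (by linarith : (0:ℝ) ≤ L - 1)]
    have t1 : (0:ℝ) ≤ abs Bstar * (L - Li) * (L^2 - L) :=
      mul_nonneg (mul_nonneg habs hu0) hLL
    have t2 : (0:ℝ) ≤ M * (L - 1) := mul_nonneg hM0 (by linarith)
    subst hD hE
    nlinarith [t1, t2]
  linarith

/-- if `σ_n² = A* (log n)³ + B* (log n)² + O(log n)` with `A* > 0`, then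
`(1/θ(n−1)) ∑_{i=1}^{n−1} |σ_n² − σ_i²|^{3/2}/(n−i) = O((log n)²)`; equivalently
`E[(|σ_n² − σ_{I_n}²|/(A* (log n)³))^{3/2}] = O((log n)^{−5/2})`. -/
theorem variance_difference_three_halves_bound
    (Astar Bstar : ℝ) (hA : 0 < Astar)
    (σsq : ℕ → ℝ) (hσnonneg : ∀ n, 0 ≤ σsq n)
    (hσ : (fun n : ℕ =>
        σsq n - (Astar * Real.log n ^ 3 + Bstar * Real.log n ^ 2))
      =O[atTop] (fun n : ℕ => Real.log n)) :
    ((fun n : ℕ => (1 / harmSum (n - 1)) *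
        ∑ i ∈ Finset.Icc 1 (n - 1),
          |σsq n - σsq i| ^ ((3 : ℝ) / 2) / ((n : ℝ) - (i : ℝ)))
      =O[atTop] (fun n : ℕ => Real.log n ^ 2)) ∧
    ((fun n : ℕ => (1 / harmSum (n - 1)) *
        ∑ i ∈ Finset.Icc 1 (n - 1),
          (|σsq n - σsq i| / (Astar * Real.log n ^ 3)) ^ ((3 : ℝ) / 2)
            / ((n : ℝ) - (i : ℝ)))
      =O[atTop] (fun n : ℕ => Real.log n ^ (-(5 : ℝ) / 2))) := by
  obtain ⟨c, hc0, hcw⟩ := hσ.exists_pos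
  obtain ⟨N₀, hN₀⟩ := eventually_atTop.mp hcw.bound
  set P : ℕ → ℝ := fun k => Astar * Real.log k ^ 3 + Bstar * Real.log k ^ 2 with hP
  set M : ℝ := ∑ k ∈ Finset.range N₀, |σsq k - P k| with hM
  have hM0 : 0 ≤ M := Finset.sum_nonneg fun _ _ => abs_nonneg _
  have herr : ∀ k : ℕ, 1 ≤ k → |σsq k - P k| ≤ c * Real.log k + M := by
    intro k hk
    have hlogk : 0 ≤ Real.log k := Real.log_nonneg (by exact_mod_cast hk)
    simp only [hP]
    by_cases hkN : N₀ ≤ k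
    · have := hN₀ k hkN
      rw [Real.norm_eq_abs, Real.norm_eq_abs, abs_of_nonneg hlogk] at this
      linarith
    · have hmem : k ∈ Finset.range N₀ := Finset.mem_range.mpr (by omega)
      have h1 := Finset.single_le_sum (f := fun k => |σsq k - P k|)
        (fun _ _ => abs_nonneg _) hmem
      rw [← hM] at h1
      simp only [hP] at h1
      have hcl : 0 ≤ c * Real.log k := mul_nonneg (le_of_lt hc0) hlogk
      linarith
  set D : ℝ := 3*Astar + 2*|Bstar| with hD
  set E : ℝ := 2*c + 2*M with hE
  have hD0 : 0 ≤ D := by have := abs_nonneg Bstar; simp only [hD]; linarith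
  have hE0 : 0 ≤ E := by simp only [hE]; linarith
  set K : ℝ := 54*Hf D + 4*Hf E with hK
  have hK0 : 0 ≤ K := by
    have := Hf_nonneg D; have := Hf_nonneg E; simp only [hK]; linarith
  clear_value P M D E K
  -- pointwise difference bound
  have hΔ := delta_bound Astar Bstar c M D E hA hM0 σsq P
    (fun k => by rw [hP]) herr hc0 hD hE
  -- a generic eventual bound giving both parts
  have hmain : ∀ n : ℕ, max N₀ 3 ≤ n →
      0 ≤ (1 / harmSum (n - 1)) * ∑ i ∈ Finset.Icc 1 (n - 1),
          |σsq n - σsq i| ^ ((3 : ℝ) / 2) / ((n : ℝ) - (i : ℝ)) ∧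
      (1 / harmSum (n - 1)) * ∑ i ∈ Finset.Icc 1 (n - 1),
          |σsq n - σsq i| ^ ((3 : ℝ) / 2) / ((n : ℝ) - (i : ℝ)) ≤ K * Real.log n ^ 2 := by
    intro n hn
    have hn3 : 3 ≤ n := le_trans (le_max_right _ _) hn
    set L := Real.log n with hLdef
    have hL1 : 1 ≤ L := one_le_log n hn3
    have hθ : L ≤ harmSum (n-1) := log_le_harmSum n (by omega)
    have hθ0 : (0:ℝ) < harmSum (n-1) := by linarith
    have hSnonneg : 0 ≤ ∑ i ∈ Finset.Icc 1 (n - 1),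
        |σsq n - σsq i| ^ ((3 : ℝ) / 2) / ((n : ℝ) - (i : ℝ)) := by
      apply Finset.sum_nonneg
      intro i hi
      rw [Finset.mem_Icc] at hi
      have hIN : (i:ℝ) ≤ (n:ℝ) - 1 := by
        have h0 : (i:ℝ) ≤ ((n-1:ℕ):ℝ) := by exact_mod_cast hi.2
        have h2 : ((n-1:ℕ):ℝ) = (n:ℝ) - 1 := by
          have : 1 ≤ n := by omega
          push_cast [this]; ring
        linarith
      exact div_nonneg (Real.rpow_nonneg (abs_nonneg _) _) (by linarith)
    constructor
    · exact mul_nonneg (by positivity) hSnonneg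
    · have hSb := sum_bound σsq D E hD0 hE0 n hn3 (hΔ n hn3)
      rw [hK]
      calc (1 / harmSum (n - 1)) * ∑ i ∈ Finset.Icc 1 (n - 1),
            |σsq n - σsq i| ^ ((3 : ℝ) / 2) / ((n : ℝ) - (i : ℝ))
          ≤ (1 / harmSum (n - 1)) * ((54*Hf D + 4*Hf E) * L^3) := by
            apply mul_le_mul_of_nonneg_left _ (by positivity)
            exact hSb
        _ = (54*Hf D + 4*Hf E) * L^3 / harmSum (n-1) := by ring
        _ ≤ (54*Hf D + 4*Hf E) * L^3 / L := by
            apply div_le_div_of_nonneg_left _ (by linarith) hθ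
            have := Hf_nonneg D; have := Hf_nonneg E
            positivity
        _ = (54*Hf D + 4*Hf E) * L^2 := by
            field_simp
  constructor
  · rw [isBigO_iff]
    refine ⟨K, ?_⟩
    filter_upwards [eventually_ge_atTop (max N₀ 3)] with n hn
    obtain ⟨h0, hb⟩ := hmain n hn
    have hn3 : 3 ≤ n := le_trans (le_max_right _ _) hn
    have hL1 : 1 ≤ Real.log n := one_le_log n hn3
    rw [Real.norm_eq_abs, Real.norm_eq_abs, abs_of_nonneg h0,
      abs_of_nonneg (by positivity : (0:ℝ) ≤ Real.log n ^ 2)]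
    exact hb
  · rw [isBigO_iff]
    refine ⟨K / Astar ^ ((3:ℝ)/2), ?_⟩
    filter_upwards [eventually_ge_atTop (max N₀ 3)] with n hn
    obtain ⟨h0, hb⟩ := hmain n hn
    have hn3 : 3 ≤ n := le_trans (le_max_right _ _) hn
    set L := Real.log n with hLdef
    have hL1 : 1 ≤ L := one_le_log n hn3
    have hL0 : (0:ℝ) < L := by linarith
    have hAL : (0:ℝ) < Astar * L^3 := by positivity
    have hA32 : (0:ℝ) < Astar ^ ((3:ℝ)/2) := Real.rpow_pos_of_pos hA _
    have hsqrt5 : (0:ℝ) < Real.sqrt (L^5) := Real.sqrt_pos.mpr (by positivity)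
    -- rewrite the sum
    have hsum_eq : ∑ i ∈ Finset.Icc 1 (n - 1),
        (|σsq n - σsq i| / (Astar * L ^ 3)) ^ ((3 : ℝ) / 2) / ((n : ℝ) - (i : ℝ))
        = (∑ i ∈ Finset.Icc 1 (n - 1),
            |σsq n - σsq i| ^ ((3 : ℝ) / 2) / ((n : ℝ) - (i : ℝ)))
          * (1 / (Astar * L^3) ^ ((3:ℝ)/2)) := by
      rw [Finset.sum_mul]
      apply Finset.sum_congr rfl
      intro i _
      rw [Real.div_rpow (abs_nonneg _) (le_of_lt hAL)]
      ring
    have hALpow : (Astar * L^3) ^ ((3:ℝ)/2) = Astar ^ ((3:ℝ)/2) * (L^2 * Real.sqrt (L^5)) := by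
      rw [Real.mul_rpow (le_of_lt hA) (by positivity), Hf_eq (L^3) (by positivity), Hf_def]
      congr 1
      rw [show (L^3)^3 = (L^2)^2 * L^5 by ring, Real.sqrt_mul (by positivity),
        Real.sqrt_sq (by positivity)]
    have hLneg : L ^ (-(5:ℝ)/2) = (Real.sqrt (L^5))⁻¹ := by
      rw [show (-(5:ℝ)/2) = -((5:ℝ)/2) by norm_num, Real.rpow_neg (le_of_lt hL0),
        rpow_5_half L (le_of_lt hL0)]
    rw [Real.norm_eq_abs, Real.norm_eq_abs, hsum_eq]
    have hgoal_lhs : (1 / harmSum (n - 1)) * ((∑ i ∈ Finset.Icc 1 (n - 1),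
            |σsq n - σsq i| ^ ((3 : ℝ) / 2) / ((n : ℝ) - (i : ℝ)))
          * (1 / (Astar * L^3) ^ ((3:ℝ)/2)))
        = ((1 / harmSum (n - 1)) * ∑ i ∈ Finset.Icc 1 (n - 1),
            |σsq n - σsq i| ^ ((3 : ℝ) / 2) / ((n : ℝ) - (i : ℝ)))
          * (1 / (Astar * L^3) ^ ((3:ℝ)/2)) := by ring
    rw [hgoal_lhs]
    have hinv0 : (0:ℝ) < (Astar * L^3) ^ ((3:ℝ)/2) := Real.rpow_pos_of_pos hAL _
    rw [abs_of_nonneg (mul_nonneg h0 (by positivity)),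
      abs_of_nonneg (le_of_lt (Real.rpow_pos_of_pos hL0 _))]
    calc ((1 / harmSum (n - 1)) * ∑ i ∈ Finset.Icc 1 (n - 1),
            |σsq n - σsq i| ^ ((3 : ℝ) / 2) / ((n : ℝ) - (i : ℝ)))
          * (1 / (Astar * L^3) ^ ((3:ℝ)/2))
        ≤ (K * L^2) * (1 / (Astar * L^3) ^ ((3:ℝ)/2)) := by
          apply mul_le_mul_of_nonneg_right hb (by positivity)
      _ = K / Astar ^ ((3:ℝ)/2) * L ^ (-(5:ℝ)/2) := by
          rw [hALpow, hLneg]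
          field_simp
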